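/- Let Δ be a simplicial complex on [n-1]. The binomial correspondence X ↦ (Proj(n,X), Link(n,X)) restricts to a bijection between the k-dimensional spanning trees of Cone(n,Δ) and the rooted (n-1,k)-forests of Δ. In particular, for F ∪ Cone(n,R) with F an (n-1,k)-complex and R an (n-1,k-1)-complex of Δ: F ∪ Cone(n,R) is a k-tree of Cone(n,Δ) if and only if (F,R) is a rooted (n-1,k)-forest of Δ. -/

import Mathlib

open Finset

/-- Sign entry of the simplicial boundary matrix between faces `σ ⊆ τ` with `|σ|+1 = |τ|`. -/
def bdE {n : ℕ} (σ τ : Finset (Fin n)) : ℤ :=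
  if σ ⊆ τ ∧ σ.card + 1 = τ.card then
    ∑ a ∈ τ \ σ, (-1 : ℤ) ^ (τ.filter (fun b => b < a)).card
  else 0

/-- Faces of `X` of cardinality `c` (i.e. dimension `c-1`). -/
def cF {n : ℕ} (X : Finset (Finset (Fin n))) (c : ℕ) : Finset (Finset (Fin n)) :=
  X.filter (fun s => s.card = c)

/-- Relative faces of the pair `(X,Y)` of cardinality `c`. -/
def relF {n : ℕ} (X Y : Finset (Finset (Fin n))) (c : ℕ) : Finset (Finset (Fin n)) :=
  (X \ Y).filter (fun s => s.card = c)

/-- Relative boundary matrix from cardinality level `c` to level `c-1`. -/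
def dMat {n : ℕ} (X Y : Finset (Finset (Fin n))) (c : ℕ) :
    Matrix ↥(relF X Y (c - 1)) ↥(relF X Y c) ℤ :=
  Matrix.of fun σ τ => bdE σ.1 τ.1

/-- Relative boundary map (as a linear map on integer chains). -/
noncomputable def dLin {n : ℕ} (X Y : Finset (Finset (Fin n))) (c : ℕ) :
    (↥(relF X Y c) → ℤ) →ₗ[ℤ] (↥(relF X Y (c - 1)) → ℤ) :=
  Matrix.toLin' (dMat X Y c)

/-- Relative simplicial homology of the pair `(X,Y)` at cardinality level `c`
(i.e. the homology group `H_{c-1}(X,Y)`; for `Y = ∅` this is reduced homology `H̃_{c-1}(X)`). -/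
abbrev RelH {n : ℕ} (X Y : Finset (Finset (Fin n))) (c : ℕ) :=
  LinearMap.ker (dLin X Y c) ⧸
    Submodule.comap (LinearMap.ker (dLin X Y c)).subtype (LinearMap.range (dLin X Y (c + 1)))

/-- Relative boundary matrix over `ℚ`. -/
noncomputable def qMat {n : ℕ} (X Y : Finset (Finset (Fin n))) (c : ℕ) :
    Matrix ↥(relF X Y (c - 1)) ↥(relF X Y c) ℚ :=
  (dMat X Y c).map fun z => (z : ℚ)

/-- Relative Betti number at cardinality level `c`, i.e. `β_{c-1}(X,Y)`. -/
noncomputable def bettiL {n : ℕ} (X Y : Finset (Finset (Fin n))) (c : ℕ) : ℕ :=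
  ((relF X Y c).card - (qMat X Y c).rank) - (qMat X Y (c + 1)).rank

/-- An abstract simplicial complex (including the empty face). -/
def IsComplex {n : ℕ} (X : Finset (Finset (Fin n))) : Prop :=
  ∅ ∈ X ∧ ∀ s ∈ X, ∀ t ⊆ s, t ∈ X

/-- `X` is an `(n,k)`-complex of `Δ`: a complex with `K^{k-1} ∩ Δ ⊆ X ⊆ K^k ∩ Δ`. -/
def KCplx {n : ℕ} (Δ : Finset (Finset (Fin n))) (k : ℕ) (X : Finset (Finset (Fin n))) : Prop :=
  IsComplex X ∧ Δ.filter (fun s => s.card ≤ k) ⊆ X ∧ X ⊆ Δ.filter (fun s => s.card ≤ k + 1)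

/-- The simplicial cone over `R` with apex the distinguished vertex `Fin.last n`. -/
def coneC {n : ℕ} (R : Finset (Finset (Fin (n + 1)))) : Finset (Finset (Fin (n + 1))) :=
  R ∪ R.image (insert (Fin.last n))

/-- `Link(n, X)` relative to `Δ`: the faces `σ ∈ Δ` with `σ ∪ {n} ∈ X`. -/
def linkC {n : ℕ} (Δ X : Finset (Finset (Fin (n + 1)))) : Finset (Finset (Fin (n + 1))) :=
  Δ.filter (fun s => insert (Fin.last n) s ∈ X)

/-- `X` is a `k`-dimensional spanning tree of `Γ`: an `(n,k)`-complex of `Γ` with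
`β_k(X) = 0` and `|X_k| = rank ∂_k^Γ`. -/
def IsTree {n : ℕ} (Γ : Finset (Finset (Fin n))) (k : ℕ) (X : Finset (Finset (Fin n))) : Prop :=
  KCplx Γ k X ∧ bettiL X ∅ (k + 1) = 0 ∧ (cF X (k + 1)).card = (qMat Γ ∅ (k + 1)).rank

lemma bdE_of_not {n : ℕ} {σ τ : Finset (Fin n)} (h : ¬(σ ⊆ τ ∧ σ.card + 1 = τ.card)) :
    bdE σ τ = 0 := if_neg h

lemma bdE_ne_zero {n : ℕ} {σ τ : Finset (Fin n)} (h : bdE σ τ ≠ 0) :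
    σ ⊆ τ ∧ σ.card + 1 = τ.card := by
  by_contra hc; exact h (bdE_of_not hc)

lemma bdE_insert {n : ℕ} {σ : Finset (Fin n)} {a : Fin n} (ha : a ∉ σ) :
    bdE σ (insert a σ) = (-1) ^ (σ.filter (fun b => b < a)).card := by
  have hc : σ.card + 1 = (insert a σ).card := by rw [card_insert_of_notMem ha]
  have hsd : insert a σ \ σ = {a} := by
    ext x; simp only [mem_sdiff, mem_insert, mem_singleton]
    constructor
    · rintro ⟨h1 | h1, h2⟩ <;> [exact h1; exact absurd h1 h2]
    · rintro rfl; exact ⟨Or.inl rfl, ha⟩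
  rw [bdE, if_pos ⟨subset_insert _ _, hc⟩, hsd, sum_singleton, filter_insert,
    if_neg (lt_irrefl a)]

lemma bd_sq_aux {n : ℕ} {ρ t : Finset (Fin n)} {a b : Fin n} (hρt : ρ ⊆ t) (hab : a < b)
    (ha : a ∈ t \ ρ) (hb : b ∈ t \ ρ) (ht : t \ ρ = {a, b}) :
    bdE ρ (insert a ρ) * bdE (insert a ρ) t + bdE ρ (insert b ρ) * bdE (insert b ρ) t = 0 := by
  have hane : a ∉ ρ := (mem_sdiff.1 ha).2
  have hbne : b ∉ ρ := (mem_sdiff.1 hb).2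
  have habne : a ≠ b := ne_of_lt hab
  have htab : ρ ∪ {a, b} = t := by
    rw [← ht]; exact union_sdiff_of_subset hρt
  have ht1 : t = insert b (insert a ρ) := by
    rw [← htab]; ext x; simp [mem_insert, mem_union]; tauto
  have ht2 : t = insert a (insert b ρ) := by
    rw [← htab]; ext x; simp [mem_insert, mem_union]
  have e1 : bdE ρ (insert a ρ) = (-1) ^ (ρ.filter (fun c => c < a)).card := bdE_insert hane
  have e2 : bdE ρ (insert b ρ) = (-1) ^ (ρ.filter (fun c => c < b)).card := bdE_insert hbne
  have e3 : bdE (insert a ρ) t = (-1) ^ ((ρ.filter (fun c => c < b)).card + 1) := by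
    rw [ht1, bdE_insert (by simp [habne.symm, hbne] : b ∉ insert a ρ)]
    congr 1
    rw [filter_insert, if_pos hab, card_insert_of_notMem (fun hc => hane (mem_filter.1 hc).1)]
  have e4 : bdE (insert b ρ) t = (-1) ^ (ρ.filter (fun c => c < a)).card := by
    rw [ht2, bdE_insert (by simp [habne, hane] : a ∉ insert b ρ)]
    congr 1
    rw [filter_insert, if_neg (by exact fun hc => absurd (hab.trans hc) (lt_irrefl a))]
  rw [e1, e2, e3, e4, pow_succ]
  ring

lemma bd_sq {n : ℕ} (ρ t : Finset (Fin n)) :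
    ∑ σ ∈ t.powerset, bdE ρ σ * bdE σ t = 0 := by
  by_cases h1 : ρ ⊆ t ∧ ρ.card + 2 = t.card
  · have hcd : (t \ ρ).card = 2 := by
      rw [card_sdiff_of_subset h1.1]; omega
    obtain ⟨a, b, hab, habs⟩ := card_eq_two.1 hcd
    have hsub : {insert a ρ, insert b ρ} ⊆ t.powerset := by
      intro σ hσ
      have ha : a ∈ t := (mem_sdiff.1 (habs ▸ mem_insert_self a {b} : a ∈ t \ ρ)).1
      have hb : b ∈ t := by
        have : b ∈ t \ ρ := habs ▸ (by simp : b ∈ ({a, b} : Finset (Fin n)))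
        exact (mem_sdiff.1 this).1
      rcases mem_insert.1 hσ with rfl | hσ
      · exact mem_powerset.2 (insert_subset ha h1.1)
      · rw [mem_singleton.1 hσ]; exact mem_powerset.2 (insert_subset hb h1.1)
    have hzero : ∀ σ ∈ t.powerset, σ ∉ ({insert a ρ, insert b ρ} : Finset (Finset (Fin n))) →
        bdE ρ σ * bdE σ t = 0 := by
      intro σ hσ hnot
      by_contra hne
      have h2 := bdE_ne_zero (left_ne_zero_of_mul hne)
      have hcd1 : (σ \ ρ).card = 1 := by rw [card_sdiff_of_subset h2.1]; omega
      obtain ⟨x, hx⟩ := card_eq_one.1 hcd1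
      have hσx : σ = insert x ρ := by
        have h3 := union_sdiff_of_subset h2.1
        rw [hx] at h3
        rw [← h3]; ext y; simp [mem_union, mem_insert]
      have hxt : x ∈ t \ ρ := by
        have hx1 : x ∈ σ \ ρ := hx ▸ mem_singleton_self x
        have := mem_sdiff.1 hx1
        exact mem_sdiff.2 ⟨mem_powerset.1 hσ this.1, this.2⟩
      rw [habs] at hxt
      rcases mem_insert.1 hxt with rfl | hxt
      · exact hnot (mem_insert.2 (Or.inl hσx))
      · rw [mem_singleton.1 hxt] at hσx
        exact hnot (mem_insert.2 (Or.inr (mem_singleton.2 hσx)))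
    rw [← sum_subset hsub hzero]
    have hane : insert a ρ ≠ insert b ρ := by
      intro h
      have ha' : a ∉ ρ := (mem_sdiff.1 (habs ▸ mem_insert_self a {b} : a ∈ t \ ρ)).2
      have hb' : b ∉ ρ := by
        have : b ∈ t \ ρ := habs ▸ (by simp : b ∈ ({a, b} : Finset (Fin n)))
        exact (mem_sdiff.1 this).2
      have : a ∈ insert b ρ := h ▸ mem_insert_self a ρ
      rcases mem_insert.1 this with h' | h'
      · exact hab h'
      · exact ha' h'
    rw [sum_pair hane]
    have ha : a ∈ t \ ρ := habs ▸ mem_insert_self a {b}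
    have hb : b ∈ t \ ρ := habs ▸ (by simp : b ∈ ({a, b} : Finset (Fin n)))
    rcases lt_or_gt_of_ne hab with h | h
    · exact bd_sq_aux h1.1 h ha hb habs
    · rw [add_comm]
      exact bd_sq_aux h1.1 h hb ha (by rw [habs]; exact pair_comm a b)
  · apply sum_eq_zero
    intro σ hσ
    by_contra hne
    have h2 := bdE_ne_zero (left_ne_zero_of_mul hne)
    have h3 := bdE_ne_zero (right_ne_zero_of_mul hne)
    exact h1 ⟨h2.1.trans h3.1, by omega⟩

lemma bd_mid_zero {n : ℕ} {K : Finset (Finset (Fin n))} (hK : ∀ s ∈ K, ∀ t ⊆ s, t ∈ K)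
    {ρ t : Finset (Fin n)} (ht : t ∈ K) {c : ℕ} (hρ : ρ.card + 2 = c) (htc : t.card = c) :
    ∑ σ ∈ K.filter (fun s => s.card + 1 = c), bdE ρ σ * bdE σ t = 0 := by
  set A := K.filter (fun s => s.card + 1 = c) with hA
  have e1 : ∑ σ ∈ A ∩ t.powerset, bdE ρ σ * bdE σ t = ∑ σ ∈ A, bdE ρ σ * bdE σ t := by
    apply sum_subset inter_subset_left
    intro σ hσ hσn
    have : σ ∉ t.powerset := fun hp => hσn (mem_inter.2 ⟨hσ, hp⟩)
    have : ¬ σ ⊆ t := fun hs => this (mem_powerset.2 hs)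
    rw [bdE_of_not (fun hc => this hc.1), mul_zero]
  have e2 : ∑ σ ∈ A ∩ t.powerset, bdE ρ σ * bdE σ t = ∑ σ ∈ t.powerset, bdE ρ σ * bdE σ t := by
    apply sum_subset inter_subset_right
    intro σ hσ hσn
    have hσK : σ ∈ K := hK t ht σ (mem_powerset.1 hσ)
    have : σ.card + 1 ≠ c := by
      intro hc
      exact hσn (mem_inter.2 ⟨mem_filter.2 ⟨hσK, hc⟩, hσ⟩)
    rw [bdE_of_not (fun hc => this (by omega)), zero_mul]
  rw [← e1, e2, bd_sq]

section cone

variable {n : ℕ}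

lemma bdE_not_mem_R {R : Finset (Finset (Fin n))} (hR : ∀ s ∈ R, ∀ t ⊆ s, t ∈ R)
    {σ τ : Finset (Fin n)} (hσ : σ ∉ R) (hτ : τ ∈ R) : bdE σ τ = 0 :=
  bdE_of_not (fun h => hσ (hR τ hτ σ h.1))

lemma bdE_nu_left {σ τ : Finset (Fin (n+1))} (hνσ : Fin.last n ∈ σ) (hντ : Fin.last n ∉ τ) :
    bdE σ τ = 0 :=
  bdE_of_not (fun h => hντ (h.1 hνσ))

lemma bdE_FR_W {R : Finset (Finset (Fin (n+1)))} {σ τ : Finset (Fin (n+1))}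
    (hνσ : Fin.last n ∉ σ) (hντ : Fin.last n ∉ τ) (hσR : σ ∉ R) (hτR : τ ∈ R) :
    bdE σ (insert (Fin.last n) τ) = 0 := by
  apply bdE_of_not
  rintro ⟨hsub, hcard⟩
  rw [card_insert_of_notMem hντ] at hcard
  have hστ : σ ⊆ τ := (subset_insert_iff_of_notMem hνσ).1 hsub
  have : σ = τ := eq_of_subset_of_card_le hστ (by omega)
  exact hσR (this ▸ hτR)

lemma bdE_A_W {σ τ : Finset (Fin (n+1))} (hνσ : Fin.last n ∉ σ) (hντ : Fin.last n ∉ τ) :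
    bdE σ (insert (Fin.last n) τ) = if σ = τ then (-1) ^ τ.card else 0 := by
  split_ifs with h
  · subst h
    rw [bdE_insert hντ]
    congr 1
    rw [filter_eq_self.2]
    intro b hb
    exact lt_of_le_of_ne (Fin.le_last b) (fun hc => hντ (hc ▸ hb))
  · apply bdE_of_not
    rintro ⟨hsub, hcard⟩
    rw [card_insert_of_notMem hντ] at hcard
    have hστ : σ ⊆ τ := (subset_insert_iff_of_notMem hνσ).1 hsub
    exact h (eq_of_subset_of_card_le hστ (by omega))

lemma bdE_cone_shift {σ τ : Finset (Fin (n+1))} (hνσ : Fin.last n ∉ σ) (hντ : Fin.last n ∉ τ) :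
    bdE (insert (Fin.last n) σ) (insert (Fin.last n) τ) = bdE σ τ := by
  by_cases hcond : σ ⊆ τ ∧ σ.card + 1 = τ.card
  · have hsub : insert (Fin.last n) σ ⊆ insert (Fin.last n) τ := insert_subset_insert _ hcond.1
    have hcard : (insert (Fin.last n) σ).card + 1 = (insert (Fin.last n) τ).card := by
      rw [card_insert_of_notMem hνσ, card_insert_of_notMem hντ]; omega
    rw [bdE, if_pos ⟨hsub, hcard⟩, bdE, if_pos hcond]
    have hsd : insert (Fin.last n) τ \ insert (Fin.last n) σ = τ \ σ := by
      ext x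
      simp only [mem_sdiff, mem_insert, not_or]
      constructor
      · rintro ⟨hx1 | hx1, hx2, hx3⟩
        · exact absurd hx1 hx2
        · exact ⟨hx1, hx3⟩
      · rintro ⟨hx1, hx2⟩
        exact ⟨Or.inr hx1, fun hc => hντ (hc ▸ hx1), hx2⟩
    rw [hsd]
    apply sum_congr rfl
    intro a ha
    congr 2
    rw [filter_insert, if_neg (not_lt.2 (Fin.le_last a))]
  · rw [bdE_of_not hcond, bdE_of_not]
    rintro ⟨hsub, hcard⟩
    apply hcond
    constructor
    · intro x hx
      have hx1 : x ∈ insert (Fin.last n) τ := hsub (mem_insert_of_mem hx)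
      rcases mem_insert.1 hx1 with rfl | hx1
      · exact absurd hx hνσ
      · exact hx1
    · rw [card_insert_of_notMem hνσ, card_insert_of_notMem hντ] at hcard
      omega

end cone






section main

variable {n : ℕ} {F R : Finset (Finset (Fin (n + 1)))}

lemma relF_empty (X : Finset (Finset (Fin n))) (c : ℕ) : relF X ∅ c = cF X c := by
  rw [relF, cF, sdiff_empty]

lemma insert_injOn_R (hνF : ∀ s ∈ F, Fin.last n ∉ s) (hRF : R ⊆ F) :
    ∀ σ ∈ R, ∀ τ ∈ R, insert (Fin.last n) σ = insert (Fin.last n) τ → σ = τ := by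
  intro σ hσ τ hτ h
  have h1 : (insert (Fin.last n) σ).erase (Fin.last n) = σ := erase_insert (hνF σ (hRF hσ))
  have h2 : (insert (Fin.last n) τ).erase (Fin.last n) = τ := erase_insert (hνF τ (hRF hτ))
  rw [← h1, ← h2, h]

lemma cF_union_decomp (hνF : ∀ s ∈ F, Fin.last n ∉ s) (hRF : R ⊆ F) (c : ℕ) :
    cF (F ∪ coneC R) c =
      (cF R c ∪ relF F R c) ∪ (R.filter (fun s => s.card + 1 = c)).image (insert (Fin.last n)) := by
  ext s
  simp only [cF, relF, coneC, mem_filter, mem_union, mem_sdiff, mem_image]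
  constructor
  · rintro ⟨hs1 | hs1 | hs1, hs2⟩
    · by_cases hsR : s ∈ R
      · exact Or.inl (Or.inl ⟨hsR, hs2⟩)
      · exact Or.inl (Or.inr ⟨⟨hs1, hsR⟩, hs2⟩)
    · exact Or.inl (Or.inl ⟨hs1, hs2⟩)
    · obtain ⟨σ, hσ, rfl⟩ := hs1
      refine Or.inr ⟨σ, ⟨hσ, ?_⟩, rfl⟩
      rw [← hs2, card_insert_of_notMem (hνF σ (hRF hσ))]
  · rintro ((⟨hs1, hs2⟩ | ⟨⟨hs1, _⟩, hs2⟩) | ⟨σ, ⟨hσ1, hσ2⟩, rfl⟩)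
    · exact ⟨Or.inr (Or.inl hs1), hs2⟩
    · exact ⟨Or.inl hs1, hs2⟩
    · exact ⟨Or.inr (Or.inr ⟨σ, hσ1, rfl⟩),
        by rw [card_insert_of_notMem (hνF σ (hRF hσ1))]; exact hσ2⟩

end main

section main2

variable {n : ℕ} {F R : Finset (Finset (Fin (n + 1)))}

lemma disj_cF_relF (c : ℕ) : Disjoint (cF R c) (relF F R c) := by
  rw [disjoint_left]
  intro t ht ht'
  exact (mem_sdiff.1 (mem_filter.1 ht').1).2 (mem_filter.1 ht).1

lemma disj_union_image (hνF : ∀ s ∈ F, Fin.last n ∉ s) (hRF : R ⊆ F) (c : ℕ) :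
    Disjoint (cF R c ∪ relF F R c)
      ((R.filter (fun s => s.card + 1 = c)).image (insert (Fin.last n))) := by
  rw [disjoint_left]
  intro t ht ht'
  obtain ⟨σ, hσ, rfl⟩ := mem_image.1 ht'
  have hν : Fin.last n ∉ insert (Fin.last n) σ := by
    rcases mem_union.1 ht with h | h
    · exact hνF _ (hRF (mem_filter.1 h).1)
    · exact hνF _ (mem_sdiff.1 (mem_filter.1 h).1).1
  exact hν (mem_insert_self _ _)

lemma sum_cF_decomp {M : Type*} [AddCommMonoid M] (hνF : ∀ s ∈ F, Fin.last n ∉ s)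
    (hRF : R ⊆ F) (c : ℕ) (f : Finset (Fin (n + 1)) → M) :
    ∑ t ∈ cF (F ∪ coneC R) c, f t =
      (∑ t ∈ cF R c, f t + ∑ t ∈ relF F R c, f t) +
        ∑ σ ∈ R.filter (fun s => s.card + 1 = c), f (insert (Fin.last n) σ) := by
  rw [cF_union_decomp hνF hRF, sum_union (disj_union_image hνF hRF c),
    sum_union (disj_cF_relF c),
    sum_image (fun σ hσ τ hτ h => insert_injOn_R hνF hRF σ (mem_filter.1 hσ).1 τ (mem_filter.1 hτ).1 h)]

lemma card_cF_decomp (hνF : ∀ s ∈ F, Fin.last n ∉ s) (hRF : R ⊆ F) (c : ℕ) :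
    (cF (F ∪ coneC R) c).card =
      ((cF R c).card + (relF F R c).card) + (R.filter (fun s => s.card + 1 = c)).card := by
  have := sum_cF_decomp (M := ℕ) hνF hRF c (fun _ => 1)
  simpa using this

end main2

section ker

variable {n : ℕ}

def extQ {α : Type*} [DecidableEq α] (S : Finset α) (x : ↥S → ℚ) : α → ℚ :=
  fun t => if h : t ∈ S then x ⟨t, h⟩ else 0

lemma extQ_pos {α : Type*} [DecidableEq α] {S : Finset α} (x : ↥S → ℚ) {t : α} (h : t ∈ S) :
    extQ S x t = x ⟨t, h⟩ := dif_pos h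

lemma mulVec_rowsum {X Y : Finset (Finset (Fin n))} {c : ℕ}
    (x : ↥(relF X Y c) → ℚ) (ρ : ↥(relF X Y (c - 1))) :
    (qMat X Y c).mulVec x ρ = ∑ t ∈ relF X Y c, (bdE ρ.1 t : ℚ) * extQ _ x t := by
  rw [Finset.sum_subtype (relF X Y c) (fun _ => Iff.rfl)
    (fun t => (bdE ρ.1 t : ℚ) * extQ _ x t)]
  rw [Matrix.mulVec]
  apply Finset.sum_congr rfl
  intro τ _
  rw [extQ_pos x τ.2]
  rfl

lemma bd_mid_zeroQ {K : Finset (Finset (Fin n))} (hK : ∀ s ∈ K, ∀ t ⊆ s, t ∈ K)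
    {ρ t : Finset (Fin n)} (ht : t ∈ K) {c : ℕ} (hρ : ρ.card + 2 = c) (htc : t.card = c) :
    ∑ σ ∈ K.filter (fun s => s.card + 1 = c), (bdE ρ σ : ℚ) * (bdE σ t : ℚ) = 0 := by
  have h := bd_mid_zero hK ht hρ htc
  have : ((∑ σ ∈ K.filter (fun s => s.card + 1 = c), bdE ρ σ * bdE σ t : ℤ) : ℚ) = 0 := by
    rw [h]; rfl
  rw [← this]
  push_cast
  rfl

end ker

section bigproof

variable {n : ℕ} {F R : Finset (Finset (Fin (n + 1)))}

/-- Key: vanishing of the row sum over `colsN` columns for kernel elements of the cone matrix,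
    i.e. restriction to relative faces lies in kernel of relative boundary. -/
lemma restr_ker
    (hF : ∀ s ∈ F, ∀ t ⊆ s, t ∈ F) (hR : ∀ s ∈ R, ∀ t ⊆ s, t ∈ R)
    (hRF : R ⊆ F) (hνF : ∀ s ∈ F, Fin.last n ∉ s) {c : ℕ} (hc : 1 ≤ c)
    (x : ↥(relF (F ∪ coneC R) ∅ c) → ℚ)
    (hx : (qMat (F ∪ coneC R) ∅ c).mulVec x = 0)
    (ρ : Finset (Fin (n + 1))) (hρF : ρ ∈ F) (hρR : ρ ∉ R) (hρc : ρ.card = c - 1) :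
    ∑ t ∈ relF F R c, (bdE ρ t : ℚ) * extQ _ x t = 0 := by
  have hcolsX : relF (F ∪ coneC R) ∅ c = cF (F ∪ coneC R) c := relF_empty _ c
  have hρX : ρ ∈ relF (F ∪ coneC R) ∅ (c - 1) := by
    rw [relF_empty]
    exact mem_filter.2 ⟨subset_union_left hρF, hρc⟩
  have h0 := congrFun hx ⟨ρ, hρX⟩
  rw [mulVec_rowsum] at h0
  rw [Finset.sum_congr hcolsX (fun _ _ => rfl)] at h0
  rw [sum_cF_decomp hνF hRF c] at h0
  simp only [Pi.zero_apply] at h0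
  have e1 : ∑ t ∈ cF R c, (bdE ρ t : ℚ) * extQ _ x t = 0 := by
    apply sum_eq_zero
    intro t ht
    rw [bdE_not_mem_R hR hρR (mem_filter.1 ht).1]
    simp
  have e3 : ∑ σ ∈ R.filter (fun s => s.card + 1 = c),
      (bdE ρ (insert (Fin.last n) σ) : ℚ) * extQ _ x (insert (Fin.last n) σ) = 0 := by
    apply sum_eq_zero
    intro σ hσ
    have hσR := (mem_filter.1 hσ).1
    rw [bdE_FR_W (hνF ρ hρF) (hνF σ (hRF hσR)) hρR hσR]
    simp
  rw [e1, e3] at h0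
  -- h0 : 0 + (sum over relF F R c) + 0 = 0  (modulo assoc)
  have : ∀ t ∈ relF F R c, (bdE ρ t : ℚ) * extQ (relF F R c) (fun u => x ⟨u.1, by
      rw [hcolsX]
      exact mem_filter.2 ⟨subset_union_left (mem_sdiff.1 (mem_filter.1 u.2).1).1,
        (mem_filter.1 u.2).2⟩⟩) t
      = (bdE ρ t : ℚ) * extQ _ x t := by
    intro t ht
    rw [extQ_pos _ ht, extQ_pos x]
  linarith [h0]

lemma wval_ker
    (hR : ∀ s ∈ R, ∀ t ⊆ s, t ∈ R)
    (hRF : R ⊆ F) (hνF : ∀ s ∈ F, Fin.last n ∉ s) {c : ℕ}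
    (x : ↥(relF (F ∪ coneC R) ∅ c) → ℚ)
    (hx : (qMat (F ∪ coneC R) ∅ c).mulVec x = 0)
    (σ : Finset (Fin (n + 1))) (hσR : σ ∈ R) (hσc : σ.card + 1 = c) :
    ((-1 : ℚ)) ^ (c - 1) * extQ _ x (insert (Fin.last n) σ)
      + (∑ t ∈ cF R c, (bdE σ t : ℚ) * extQ _ x t
        + ∑ t ∈ relF F R c, (bdE σ t : ℚ) * extQ _ x t) = 0 := by
  have hcolsX : relF (F ∪ coneC R) ∅ c = cF (F ∪ coneC R) c := relF_empty _ c
  have hσX : σ ∈ relF (F ∪ coneC R) ∅ (c - 1) := by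
    rw [relF_empty]
    exact mem_filter.2 ⟨subset_union_left (hRF hσR), by omega⟩
  have h0 := congrFun hx ⟨σ, hσX⟩
  rw [mulVec_rowsum] at h0
  rw [Finset.sum_congr hcolsX (fun _ _ => rfl)] at h0
  rw [sum_cF_decomp hνF hRF c] at h0
  simp only [Pi.zero_apply] at h0
  have e3 : ∑ τ ∈ R.filter (fun s => s.card + 1 = c),
      (bdE σ (insert (Fin.last n) τ) : ℚ) * extQ _ x (insert (Fin.last n) τ)
      = ((-1 : ℚ)) ^ (c - 1) * extQ _ x (insert (Fin.last n) σ) := by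
    rw [Finset.sum_eq_single σ]
    · rw [bdE_A_W (hνF σ (hRF hσR)) (hνF σ (hRF hσR)), if_pos rfl]
      push_cast
      congr 2
      omega
    · intro τ hτ hne
      rw [bdE_A_W (hνF σ (hRF hσR)) (hνF τ (hRF (mem_filter.1 hτ).1)), if_neg (fun h => hne h.symm)]
      simp
    · intro hσn
      exact absurd (mem_filter.2 ⟨hσR, hσc⟩) hσn
  rw [e3] at h0
  linarith [h0]

lemma Prow
    (hF : ∀ s ∈ F, ∀ t ⊆ s, t ∈ F) (hR : ∀ s ∈ R, ∀ t ⊆ s, t ∈ R)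
    (hRF : R ⊆ F) {c : ℕ} (hc : 1 ≤ c)
    (ub vb : Finset (Fin (n + 1)) → ℚ)
    (hvb : ∀ ρ ∈ relF F R (c - 1), ∑ t ∈ relF F R c, (bdE ρ t : ℚ) * vb t = 0)
    (ρ : Finset (Fin (n + 1))) (hρR : ρ ∈ R) (hρc : ρ.card + 2 = c) :
    ∑ σ ∈ R.filter (fun s => s.card + 1 = c),
      (bdE ρ σ : ℚ) * (-((-1 : ℚ) ^ (c - 1)) *
        (∑ t ∈ cF R c, (bdE σ t : ℚ) * ub t + ∑ t ∈ relF F R c, (bdE σ t : ℚ) * vb t)) = 0 := by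
  have swap : ∀ (S : Finset (Finset (Fin (n+1)))) (g : Finset (Fin (n+1)) → ℚ),
      ∑ σ ∈ R.filter (fun s => s.card + 1 = c), (bdE ρ σ : ℚ) * ∑ t ∈ S, (bdE σ t : ℚ) * g t
      = ∑ t ∈ S, (∑ σ ∈ R.filter (fun s => s.card + 1 = c),
          (bdE ρ σ : ℚ) * (bdE σ t : ℚ)) * g t := by
    intro S g
    calc ∑ σ ∈ R.filter (fun s => s.card + 1 = c), (bdE ρ σ : ℚ) * ∑ t ∈ S, (bdE σ t : ℚ) * g t
        = ∑ σ ∈ R.filter (fun s => s.card + 1 = c), ∑ t ∈ S,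
            (bdE ρ σ : ℚ) * (bdE σ t : ℚ) * g t := by
          apply sum_congr rfl
          intro σ _
          rw [mul_sum]
          apply sum_congr rfl
          intro t _
          ring
      _ = ∑ t ∈ S, ∑ σ ∈ R.filter (fun s => s.card + 1 = c),
            (bdE ρ σ : ℚ) * (bdE σ t : ℚ) * g t := Finset.sum_comm
      _ = ∑ t ∈ S, (∑ σ ∈ R.filter (fun s => s.card + 1 = c),
            (bdE ρ σ : ℚ) * (bdE σ t : ℚ)) * g t := by
          apply sum_congr rfl
          intro t _
          rw [sum_mul]
  have hT1 : ∑ σ ∈ R.filter (fun s => s.card + 1 = c),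
      (bdE ρ σ : ℚ) * ∑ t ∈ cF R c, (bdE σ t : ℚ) * ub t = 0 := by
    rw [swap]
    apply sum_eq_zero
    intro t ht
    rw [bd_mid_zeroQ hR (mem_filter.1 ht).1 hρc (mem_filter.1 ht).2, zero_mul]
  have hT2 : ∑ σ ∈ R.filter (fun s => s.card + 1 = c),
      (bdE ρ σ : ℚ) * ∑ t ∈ relF F R c, (bdE σ t : ℚ) * vb t = 0 := by
    rw [swap]
    have hsplit : ∀ t ∈ relF F R c,
        ∑ σ ∈ R.filter (fun s => s.card + 1 = c), (bdE ρ σ : ℚ) * (bdE σ t : ℚ)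
        = - ∑ σ ∈ relF F R (c - 1), (bdE ρ σ : ℚ) * (bdE σ t : ℚ) := by
      intro t ht
      have htF : t ∈ F := (mem_sdiff.1 (mem_filter.1 ht).1).1
      have htc : t.card = c := (mem_filter.1 ht).2
      have hFf : ∑ σ ∈ F.filter (fun s => s.card + 1 = c), (bdE ρ σ : ℚ) * (bdE σ t : ℚ) = 0 :=
        bd_mid_zeroQ hF htF hρc htc
      have hun : F.filter (fun s => s.card + 1 = c)
          = R.filter (fun s => s.card + 1 = c) ∪ relF F R (c - 1) := by
        ext s
        simp only [mem_filter, mem_union, relF, mem_sdiff]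
        constructor
        · rintro ⟨hs1, hs2⟩
          by_cases hsR : s ∈ R
          · exact Or.inl ⟨hsR, hs2⟩
          · exact Or.inr ⟨⟨hs1, hsR⟩, by omega⟩
        · rintro (⟨hs1, hs2⟩ | ⟨⟨hs1, _⟩, hs2⟩)
          · exact ⟨hRF hs1, hs2⟩
          · exact ⟨hs1, by omega⟩
      have hdisj : Disjoint (R.filter (fun s => s.card + 1 = c)) (relF F R (c - 1)) := by
        rw [disjoint_left]
        intro a ha ha'
        exact (mem_sdiff.1 (mem_filter.1 ha').1).2 (mem_filter.1 ha).1
      rw [hun, sum_union hdisj] at hFf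
      linarith
    rw [Finset.sum_congr rfl (fun t ht => by rw [hsplit t ht])]
    have : ∑ t ∈ relF F R c, (- ∑ σ ∈ relF F R (c - 1), (bdE ρ σ : ℚ) * (bdE σ t : ℚ)) * vb t
        = - ∑ σ ∈ relF F R (c - 1), (bdE ρ σ : ℚ) *
            (∑ t ∈ relF F R c, (bdE σ t : ℚ) * vb t) := by
      calc ∑ t ∈ relF F R c, (- ∑ σ ∈ relF F R (c - 1), (bdE ρ σ : ℚ) * (bdE σ t : ℚ)) * vb t
          = - ∑ t ∈ relF F R c, ∑ σ ∈ relF F R (c - 1),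
              (bdE ρ σ : ℚ) * (bdE σ t : ℚ) * vb t := by
            rw [← Finset.sum_neg_distrib]
            apply sum_congr rfl
            intro t _
            rw [neg_mul, sum_mul]
        _ = - ∑ σ ∈ relF F R (c - 1), ∑ t ∈ relF F R c,
              (bdE ρ σ : ℚ) * (bdE σ t : ℚ) * vb t := by rw [Finset.sum_comm]
        _ = - ∑ σ ∈ relF F R (c - 1), (bdE ρ σ : ℚ) *
              (∑ t ∈ relF F R c, (bdE σ t : ℚ) * vb t) := by
            congr 1
            apply sum_congr rfl
            intro σ _
            rw [mul_sum]
            apply sum_congr rfl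
            intro t _
            ring
    rw [this]
    rw [Finset.sum_congr rfl (fun σ hσ => by rw [hvb σ hσ, mul_zero])]
    simp
  calc ∑ σ ∈ R.filter (fun s => s.card + 1 = c),
      (bdE ρ σ : ℚ) * (-((-1 : ℚ) ^ (c - 1)) *
        (∑ t ∈ cF R c, (bdE σ t : ℚ) * ub t + ∑ t ∈ relF F R c, (bdE σ t : ℚ) * vb t))
      = -((-1 : ℚ) ^ (c - 1)) *
        ((∑ σ ∈ R.filter (fun s => s.card + 1 = c),
          (bdE ρ σ : ℚ) * ∑ t ∈ cF R c, (bdE σ t : ℚ) * ub t)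
        + ∑ σ ∈ R.filter (fun s => s.card + 1 = c),
          (bdE ρ σ : ℚ) * ∑ t ∈ relF F R c, (bdE σ t : ℚ) * vb t) := by
        rw [← sum_add_distrib, Finset.mul_sum]
        apply sum_congr rfl
        intro σ _
        ring
    _ = 0 := by rw [hT1, hT2]; ring

lemma finrank_ker_cone
    (hF : ∀ s ∈ F, ∀ t ⊆ s, t ∈ F) (hR : ∀ s ∈ R, ∀ t ⊆ s, t ∈ R)
    (hRF : R ⊆ F) (hνF : ∀ s ∈ F, Fin.last n ∉ s) {c : ℕ} (hc : 1 ≤ c) :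
    Module.finrank ℚ ↥(LinearMap.ker (qMat (F ∪ coneC R) ∅ c).mulVecLin)
      = (cF R c).card + Module.finrank ℚ ↥(LinearMap.ker (qMat F R c).mulVecLin) := by
  classical
  have hmemU : ∀ t ∈ cF R c, t ∈ relF (F ∪ coneC R) ∅ c := by
    intro t ht
    rw [relF_empty]
    exact mem_filter.2 ⟨subset_union_left (hRF (mem_filter.1 ht).1), (mem_filter.1 ht).2⟩
  have hmemV : ∀ t ∈ relF F R c, t ∈ relF (F ∪ coneC R) ∅ c := by
    intro t ht
    rw [relF_empty]
    exact mem_filter.2 ⟨subset_union_left (mem_sdiff.1 (mem_filter.1 ht).1).1,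
      (mem_filter.1 ht).2⟩
  have hmemW : ∀ σ ∈ R, σ.card + 1 = c → insert (Fin.last n) σ ∈ relF (F ∪ coneC R) ∅ c := by
    intro σ hσ hσc
    rw [relF_empty]
    refine mem_filter.2 ⟨mem_union_right _ (mem_union_right _ (mem_image_of_mem _ hσ)), ?_⟩
    rw [card_insert_of_notMem (hνF σ (hRF hσ))]
    exact hσc
  set ιU : ↥(cF R c) → ↥(relF (F ∪ coneC R) ∅ c) := fun u => ⟨u.1, hmemU u.1 u.2⟩ with hιU
  set ιV : ↥(relF F R c) → ↥(relF (F ∪ coneC R) ∅ c) := fun u => ⟨u.1, hmemV u.1 u.2⟩ with hιV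
  have hkerres : ∀ x : (↥(relF (F ∪ coneC R) ∅ c) → ℚ),
      x ∈ LinearMap.ker (qMat (F ∪ coneC R) ∅ c).mulVecLin →
      (LinearMap.funLeft ℚ ℚ ιV) x ∈ LinearMap.ker (qMat F R c).mulVecLin := by
    intro x hx
    rw [LinearMap.mem_ker] at hx ⊢
    rw [Matrix.mulVecLin_apply] at hx ⊢
    funext ρ
    rw [Matrix.mulVec, Pi.zero_apply]
    have hmm := restr_ker hF hR hRF hνF hc x hx ρ.1
      (mem_sdiff.1 (mem_filter.1 ρ.2).1).1 (mem_sdiff.1 (mem_filter.1 ρ.2).1).2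
      (mem_filter.1 ρ.2).2
    rw [← hmm]
    rw [Finset.sum_subtype (relF F R c) (fun _ => Iff.rfl)
      (fun t => (bdE ρ.1 t : ℚ) * extQ _ x t)]
    apply Finset.sum_congr rfl
    intro τ _
    rw [extQ_pos x (hmemV τ.1 τ.2)]
    rfl
  let φ : ↥(LinearMap.ker (qMat (F ∪ coneC R) ∅ c).mulVecLin) →ₗ[ℚ]
      ((↥(cF R c) → ℚ) × ↥(LinearMap.ker (qMat F R c).mulVecLin)) :=
    ((LinearMap.funLeft ℚ ℚ ιU).comp (Submodule.subtype _)).prod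
      (LinearMap.codRestrict _ ((LinearMap.funLeft ℚ ℚ ιV).comp (Submodule.subtype _))
        (fun x => hkerres x.1 x.2))
  have hcolsX : relF (F ∪ coneC R) ∅ c = cF (F ∪ coneC R) c := relF_empty _ c
  have hee : ((-1 : ℚ)) ^ (c - 1) * ((-1 : ℚ)) ^ (c - 1) = 1 := by
    rw [← pow_add, ← two_mul, pow_mul]
    norm_num
  have hinj : Function.Injective φ := by
    intro x y hxy
    have h1 : ∀ u : ↥(cF R c), x.1 (ιU u) = y.1 (ιU u) := by
      intro u
      exact congrFun (congrArg Prod.fst hxy) u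
    have h2 : ∀ v : ↥(relF F R c), x.1 (ιV v) = y.1 (ιV v) := by
      intro v
      have := congrArg (fun z => (Prod.snd z : ↥(LinearMap.ker (qMat F R c).mulVecLin)).1) hxy
      exact congrFun this v
    have hU : ∀ t (h : t ∈ cF R c), extQ _ x.1 t = extQ _ y.1 t := by
      intro t h
      rw [extQ_pos x.1 (hmemU t h), extQ_pos y.1 (hmemU t h)]
      exact h1 ⟨t, h⟩
    have hV : ∀ t (h : t ∈ relF F R c), extQ _ x.1 t = extQ _ y.1 t := by
      intro t h
      rw [extQ_pos x.1 (hmemV t h), extQ_pos y.1 (hmemV t h)]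
      exact h2 ⟨t, h⟩
    have hW : ∀ σ (hσ : σ ∈ R) (hσc : σ.card + 1 = c),
        extQ _ x.1 (insert (Fin.last n) σ) = extQ _ y.1 (insert (Fin.last n) σ) := by
      intro σ hσ hσc
      have hx0 : (qMat (F ∪ coneC R) ∅ c).mulVec x.1 = 0 := by
        have := x.2
        rwa [LinearMap.mem_ker, Matrix.mulVecLin_apply] at this
      have hy0 : (qMat (F ∪ coneC R) ∅ c).mulVec y.1 = 0 := by
        have := y.2
        rwa [LinearMap.mem_ker, Matrix.mulVecLin_apply] at this
      have wx := wval_ker hR hRF hνF x.1 hx0 σ hσ hσc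
      have wy := wval_ker hR hRF hνF y.1 hy0 σ hσ hσc
      have e1 : ∑ t ∈ cF R c, (bdE σ t : ℚ) * extQ _ x.1 t
          = ∑ t ∈ cF R c, (bdE σ t : ℚ) * extQ _ y.1 t :=
        sum_congr rfl (fun t ht => by rw [hU t ht])
      have e2 : ∑ t ∈ relF F R c, (bdE σ t : ℚ) * extQ _ x.1 t
          = ∑ t ∈ relF F R c, (bdE σ t : ℚ) * extQ _ y.1 t :=
        sum_congr rfl (fun t ht => by rw [hV t ht])
      rw [e1, e2] at wx
      have := sub_eq_zero.2 (wx.trans wy.symm)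
      have h3 : ((-1 : ℚ)) ^ (c - 1) *
          (extQ _ x.1 (insert (Fin.last n) σ) - extQ _ y.1 (insert (Fin.last n) σ)) = 0 := by
        ring_nf
        ring_nf at this
        linarith
      rcases mul_eq_zero.1 h3 with h4 | h4
      · exfalso
        have : ((-1 : ℚ)) ^ (c - 1) ≠ 0 := by
          apply pow_ne_zero
          norm_num
        exact this h4
      · linarith [sub_eq_zero.1 h4]
    apply Subtype.ext
    funext τ
    have hτ : τ.1 ∈ cF (F ∪ coneC R) c := hcolsX ▸ τ.2
    have hτ' := hτ
    rw [cF_union_decomp hνF hRF c] at hτ'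
    have hxτ : x.1 τ = extQ _ x.1 τ.1 := (extQ_pos x.1 τ.2).symm
    have hyτ : y.1 τ = extQ _ y.1 τ.1 := (extQ_pos y.1 τ.2).symm
    rw [hxτ, hyτ]
    rcases mem_union.1 hτ' with h | h
    · rcases mem_union.1 h with h' | h'
      · exact hU τ.1 h'
      · exact hV τ.1 h'
    · obtain ⟨σ, hσ, heq⟩ := mem_image.1 h
      rw [← heq]
      exact hW σ (mem_filter.1 hσ).1 (mem_filter.1 hσ).2
  have hsurj : Function.Surjective φ := by
    rintro ⟨u, v⟩
    set ub : Finset (Fin (n + 1)) → ℚ := extQ (cF R c) u with hub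
    set vb : Finset (Fin (n + 1)) → ℚ := extQ (relF F R c) v.1 with hvb
    have hub0 : ∀ t ∈ relF F R c, ub t = 0 := by
      intro t ht
      have : t ∉ cF R c := by
        intro hc'
        exact (mem_sdiff.1 (mem_filter.1 ht).1).2 (mem_filter.1 hc').1
      exact dif_neg this
    have hvb0 : ∀ t ∈ cF R c, vb t = 0 := by
      intro t ht
      have : t ∉ relF F R c := by
        intro hc'
        exact (mem_sdiff.1 (mem_filter.1 hc').1).2 (mem_filter.1 ht).1
      exact dif_neg this
    have hvbker : ∀ ρ ∈ relF F R (c - 1),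
        ∑ t ∈ relF F R c, (bdE ρ t : ℚ) * vb t = 0 := by
      intro ρ hρ
      have hv0 : (qMat F R c).mulVec v.1 = 0 := by
        have := v.2
        rwa [LinearMap.mem_ker, Matrix.mulVecLin_apply] at this
      have := congrFun hv0 ⟨ρ, hρ⟩
      rw [mulVec_rowsum] at this
      exact this
    set y : Finset (Fin (n + 1)) → ℚ := fun t =>
      if Fin.last n ∈ t then
        -((-1 : ℚ) ^ (c - 1)) *
          (∑ t' ∈ cF R c, (bdE (t.erase (Fin.last n)) t' : ℚ) * ub t'
            + ∑ t' ∈ relF F R c, (bdE (t.erase (Fin.last n)) t' : ℚ) * vb t')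
      else ub t + vb t with hy
    set x : ↥(relF (F ∪ coneC R) ∅ c) → ℚ := fun τ => y τ.1 with hx
    have hyU : ∀ t ∈ cF R c, y t = ub t := by
      intro t ht
      have hν : Fin.last n ∉ t := hνF t (hRF (mem_filter.1 ht).1)
      rw [hy]
      simp only [if_neg hν]
      rw [hvb0 t ht, add_zero]
    have hyV : ∀ t ∈ relF F R c, y t = vb t := by
      intro t ht
      have hν : Fin.last n ∉ t := hνF t (mem_sdiff.1 (mem_filter.1 ht).1).1
      rw [hy]
      simp only [if_neg hν]
      rw [hub0 t ht, zero_add]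
    have hyW : ∀ σ ∈ R, y (insert (Fin.last n) σ) =
        -((-1 : ℚ) ^ (c - 1)) *
          (∑ t' ∈ cF R c, (bdE σ t' : ℚ) * ub t'
            + ∑ t' ∈ relF F R c, (bdE σ t' : ℚ) * vb t') := by
      intro σ hσ
      have hν : Fin.last n ∉ σ := hνF σ (hRF hσ)
      rw [hy]
      simp only [if_pos (mem_insert_self (Fin.last n) σ), erase_insert hν]
    have hxmem : x ∈ LinearMap.ker (qMat (F ∪ coneC R) ∅ c).mulVecLin := by
      rw [LinearMap.mem_ker, Matrix.mulVecLin_apply]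
      funext ρ
      rw [mulVec_rowsum, Pi.zero_apply]
      have hext : ∀ t ∈ relF (F ∪ coneC R) ∅ c, (extQ _ x) t = y t := by
        intro t ht
        rw [extQ_pos x ht]
      rw [Finset.sum_congr hcolsX (fun t ht => by rw [hext t (hcolsX ▸ ht)])]
      rw [sum_cF_decomp hνF hRF c]
      have hρ2 : ρ.1 ∈ cF (F ∪ coneC R) (c - 1) := (relF_empty _ (c-1)) ▸ ρ.2
      have hρX : ρ.1 ∈ F ∪ coneC R := (mem_filter.1 hρ2).1
      have hρcard : ρ.1.card = c - 1 := (mem_filter.1 hρ2).2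
      by_cases hνρ : Fin.last n ∈ ρ.1
      · -- case P-row
        have hρnF : ρ.1 ∉ F := fun h => hνF ρ.1 h hνρ
        obtain ⟨σ', hσ', heq⟩ : ∃ σ' ∈ R, ρ.1 = insert (Fin.last n) σ' := by
          rcases mem_union.1 hρX with h | h
          · exact absurd h hρnF
          · rcases mem_union.1 h with h' | h'
            · exact absurd (hRF h') hρnF
            · obtain ⟨σ', h1, h2⟩ := mem_image.1 h'
              exact ⟨σ', h1, h2.symm⟩
        have hνσ' : Fin.last n ∉ σ' := hνF σ' (hRF hσ')
        have hσ'c : σ'.card + 2 = c := by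
          have : ρ.1.card = σ'.card + 1 := by rw [heq, card_insert_of_notMem hνσ']
          omega
        have e1 : ∑ t ∈ cF R c, (bdE ρ.1 t : ℚ) * y t = 0 := by
          apply sum_eq_zero
          intro t ht
          rw [bdE_nu_left hνρ (hνF t (hRF (mem_filter.1 ht).1))]
          simp
        have e2 : ∑ t ∈ relF F R c, (bdE ρ.1 t : ℚ) * y t = 0 := by
          apply sum_eq_zero
          intro t ht
          rw [bdE_nu_left hνρ (hνF t (mem_sdiff.1 (mem_filter.1 ht).1).1)]
          simp
        have e3 : ∑ σ ∈ R.filter (fun s => s.card + 1 = c),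
            (bdE ρ.1 (insert (Fin.last n) σ) : ℚ) * y (insert (Fin.last n) σ) = 0 := by
          have := Prow hF hR hRF hc ub vb hvbker σ' hσ' hσ'c
          rw [← this]
          apply sum_congr rfl
          intro σ hσ
          rw [heq, bdE_cone_shift hνσ' (hνF σ (hRF (mem_filter.1 hσ).1))]
          rw [hyW σ (mem_filter.1 hσ).1]
        rw [e1, e2, e3]
        ring
      · -- no apex in row
        have hρF : ρ.1 ∈ F := by
          rcases mem_union.1 hρX with h | h
          · exact h
          · rcases mem_union.1 h with h' | h'
            · exact hRF h'
            · obtain ⟨σ', _, h2⟩ := mem_image.1 h'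
              exact absurd (h2 ▸ mem_insert_self (Fin.last n) σ') hνρ
        by_cases hρR : ρ.1 ∈ R
        · -- case A-row
          have hρc1 : ρ.1.card + 1 = c := by omega
          have e3 : ∑ σ ∈ R.filter (fun s => s.card + 1 = c),
              (bdE ρ.1 (insert (Fin.last n) σ) : ℚ) * y (insert (Fin.last n) σ)
              = ((-1 : ℚ) ^ (c - 1)) * y (insert (Fin.last n) ρ.1) := by
            rw [Finset.sum_eq_single ρ.1]
            · have hcc : ρ.1.card = c - 1 := by omega
              rw [bdE_A_W hνρ hνρ, if_pos rfl, hcc]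
              push_cast
              ring
            · intro τ hτ hne
              rw [bdE_A_W hνρ (hνF τ (hRF (mem_filter.1 hτ).1)), if_neg (fun h => hne h.symm)]
              simp
            · intro hn
              exact absurd (mem_filter.2 ⟨hρR, hρc1⟩) hn
          have e1 : ∑ t ∈ cF R c, (bdE ρ.1 t : ℚ) * y t
              = ∑ t ∈ cF R c, (bdE ρ.1 t : ℚ) * ub t :=
            sum_congr rfl (fun t ht => by rw [hyU t ht])
          have e2 : ∑ t ∈ relF F R c, (bdE ρ.1 t : ℚ) * y t
              = ∑ t ∈ relF F R c, (bdE ρ.1 t : ℚ) * vb t :=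
            sum_congr rfl (fun t ht => by rw [hyV t ht])
          rw [e1, e2, e3, hyW ρ.1 hρR]
          set A := ∑ t ∈ cF R c, (bdE ρ.1 t : ℚ) * ub t
          set B := ∑ t ∈ relF F R c, (bdE ρ.1 t : ℚ) * vb t
          have h5 : ((-1 : ℚ) ^ (c - 1)) * (-((-1 : ℚ) ^ (c - 1)) * (A + B)) = -(A + B) := by
            rw [neg_mul, mul_neg, ← mul_assoc, hee, one_mul]
          rw [h5]
          ring
        · -- case B-row
          have hρN : ρ.1 ∈ relF F R (c - 1) :=
            mem_filter.2 ⟨mem_sdiff.2 ⟨hρF, hρR⟩, hρcard⟩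
          have e1 : ∑ t ∈ cF R c, (bdE ρ.1 t : ℚ) * y t = 0 := by
            apply sum_eq_zero
            intro t ht
            rw [bdE_not_mem_R hR hρR (mem_filter.1 ht).1]
            simp
          have e3 : ∑ σ ∈ R.filter (fun s => s.card + 1 = c),
              (bdE ρ.1 (insert (Fin.last n) σ) : ℚ) * y (insert (Fin.last n) σ) = 0 := by
            apply sum_eq_zero
            intro σ hσ
            rw [bdE_FR_W hνρ (hνF σ (hRF (mem_filter.1 hσ).1)) hρR (mem_filter.1 hσ).1]
            simp
          have e2 : ∑ t ∈ relF F R c, (bdE ρ.1 t : ℚ) * y t = 0 := by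
            rw [Finset.sum_congr rfl (fun t ht => by rw [hyV t ht])]
            exact hvbker ρ.1 hρN
          rw [e1, e2, e3]
          ring
    refine ⟨⟨x, hxmem⟩, ?_⟩
    have hc1 : (φ ⟨x, hxmem⟩).1 = u := by
      funext u'
      have : (φ ⟨x, hxmem⟩).1 u' = y u'.1 := rfl
      rw [this, hyU u'.1 u'.2, hub]
      rw [extQ_pos u u'.2]
    have hc2 : ((φ ⟨x, hxmem⟩).2 : ↥(relF F R c) → ℚ) = v.1 := by
      funext v'
      have : ((φ ⟨x, hxmem⟩).2 : ↥(relF F R c) → ℚ) v' = y v'.1 := rfl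
      rw [this, hyV v'.1 v'.2, hvb]
      rw [extQ_pos v.1 v'.2]
    exact Prod.ext hc1 (Subtype.ext hc2)
  have heq := LinearEquiv.finrank_eq (LinearEquiv.ofBijective φ ⟨hinj, hsurj⟩)
  rw [heq, Module.finrank_prod, Module.finrank_fintype_fun_eq_card, Fintype.card_coe]

end bigproof

section rank

variable {n : ℕ} {F R : Finset (Finset (Fin (n + 1)))}

lemma rank_nullity_q (X Y : Finset (Finset (Fin n))) (c : ℕ) :
    (qMat X Y c).rank + Module.finrank ℚ ↥(LinearMap.ker (qMat X Y c).mulVecLin)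
      = (relF X Y c).card := by
  have h := LinearMap.finrank_range_add_finrank_ker (qMat X Y c).mulVecLin
  rw [Module.finrank_fintype_fun_eq_card, Fintype.card_coe] at h
  exact h

lemma rank_cone
    (hF : ∀ s ∈ F, ∀ t ⊆ s, t ∈ F) (hR : ∀ s ∈ R, ∀ t ⊆ s, t ∈ R)
    (hRF : R ⊆ F) (hνF : ∀ s ∈ F, Fin.last n ∉ s) {c : ℕ} (hc : 1 ≤ c) :
    (qMat (F ∪ coneC R) ∅ c).rank
      = (qMat F R c).rank + (R.filter (fun s => s.card + 1 = c)).card := by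
  have h1 := rank_nullity_q (F ∪ coneC R) ∅ c
  have h2 := rank_nullity_q F R c
  have h3 := finrank_ker_cone hF hR hRF hνF hc
  have h4 : (relF (F ∪ coneC R) ∅ c).card
      = ((cF R c).card + (relF F R c).card) + (R.filter (fun s => s.card + 1 = c)).card := by
    rw [relF_empty]
    exact card_cF_decomp hνF hRF c
  omega

end rank






section assemble

variable {n : ℕ} {Δ F R : Finset (Finset (Fin (n + 1)))}

lemma rank_zero_cols {X Y : Finset (Finset (Fin n))} {c : ℕ} (h : relF X Y c = ∅) :
    (qMat X Y c).rank = 0 := by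
  have h2 := Matrix.rank_le_card_width (qMat X Y c)
  rw [Fintype.card_coe] at h2
  have h3 : (relF X Y c).card = 0 := by rw [h]; rfl
  omega

lemma rank_zero_rows {X Y : Finset (Finset (Fin n))} {c : ℕ} (h : relF X Y (c - 1) = ∅) :
    (qMat X Y c).rank = 0 := by
  have h2 := Matrix.rank_le_card_height (qMat X Y c)
  rw [Fintype.card_coe] at h2
  have h3 : (relF X Y (c - 1)).card = 0 := by rw [h]; rfl
  omega

lemma rank_coneD (hΔc : ∀ s ∈ Δ, ∀ t ⊆ s, t ∈ Δ) (hΔn : ∀ s ∈ Δ, Fin.last n ∉ s)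
    {c : ℕ} (hc : 1 ≤ c) :
    (qMat (coneC Δ) ∅ c).rank = (Δ.filter (fun s => s.card + 1 = c)).card := by
  have h1 : Δ ∪ coneC Δ = coneC Δ := by
    rw [coneC, ← union_assoc, union_self]
  have h2 := rank_cone hΔc hΔc (Finset.Subset.refl Δ) hΔn hc
  rw [h1] at h2
  have h3 : (qMat Δ Δ c).rank = 0 := by
    apply rank_zero_cols
    rw [relF, sdiff_self]
    rfl
  rw [h2, h3, zero_add]

end assemble

section mainiff

variable {n : ℕ} {Δ F R : Finset (Finset (Fin (n + 1)))}

lemma tree_iff_main (hΔc : ∀ s ∈ Δ, ∀ t ⊆ s, t ∈ Δ) (hΔn : ∀ s ∈ Δ, Fin.last n ∉ s)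
    {k : ℕ} (hk : 1 ≤ k) (hKF : KCplx Δ k F) (hKR : KCplx Δ (k - 1) R) :
    (bettiL (F ∪ coneC R) ∅ (k + 1) = 0 ∧
        (cF (F ∪ coneC R) (k + 1)).card = (qMat (coneC Δ) ∅ (k + 1)).rank)
      ↔ (bettiL F R k = 0 ∧ bettiL F R (k + 1) = 0) := by
  obtain ⟨⟨hF0, hFc⟩, hFsk, hFsub⟩ := hKF
  obtain ⟨⟨hR0, hRc⟩, hRsk, hRsub⟩ := hKR
  have hRΔ : ∀ s ∈ R, s ∈ Δ ∧ s.card ≤ k := by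
    intro s hs
    have := mem_filter.1 (hRsub hs)
    exact ⟨this.1, by omega⟩
  have hFΔ : ∀ s ∈ F, s ∈ Δ ∧ s.card ≤ k + 1 := by
    intro s hs
    have := mem_filter.1 (hFsub hs)
    exact ⟨this.1, this.2⟩
  have hRF : R ⊆ F := fun s hs => hFsk (mem_filter.2 ⟨(hRΔ s hs).1, (hRΔ s hs).2⟩)
  have hνF : ∀ s ∈ F, Fin.last n ∉ s := fun s hs => hΔn s (hFΔ s hs).1
  -- finset identities
  have hRk1 : cF R (k + 1) = ∅ := by
    rw [eq_empty_iff_forall_notMem]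
    intro s hs
    have h1 := (hRΔ s (mem_filter.1 hs).1).2
    have h2 := (mem_filter.1 hs).2
    omega
  have hFk1 : relF F R (k + 1) = cF F (k + 1) := by
    ext s
    simp only [relF, cF, mem_filter, mem_sdiff]
    constructor
    · rintro ⟨⟨h1, _⟩, h2⟩
      exact ⟨h1, h2⟩
    · rintro ⟨h1, h2⟩
      refine ⟨⟨h1, fun hs => ?_⟩, h2⟩
      have := (hRΔ s hs).2
      omega
  have hRfil : R.filter (fun s => s.card + 1 = k + 1) = cF R k := by
    rw [cF]
    apply filter_congr
    intro s _
    omega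
  have hΔfil : Δ.filter (fun s => s.card + 1 = k + 1) = cF Δ k := by
    rw [cF]
    apply filter_congr
    intro s _
    omega
  have hFRk : relF F R k = cF Δ k \ cF R k := by
    ext s
    simp only [relF, cF, mem_filter, mem_sdiff]
    constructor
    · rintro ⟨⟨h1, h2⟩, h3⟩
      exact ⟨⟨(hFΔ s h1).1, h3⟩, fun hh => h2 hh.1⟩
    · rintro ⟨⟨h1, h2⟩, h3⟩
      refine ⟨⟨hFsk (mem_filter.2 ⟨h1, by omega⟩), fun hR' => h3 ⟨hR', h2⟩⟩, h2⟩
  have hsubRk : cF R k ⊆ cF Δ k := by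
    intro s hs
    exact mem_filter.2 ⟨(hRΔ s (mem_filter.1 hs).1).1, (mem_filter.1 hs).2⟩
  have hXk2 : relF (F ∪ coneC R) ∅ (k + 1 + 1) = ∅ := by
    rw [relF_empty, eq_empty_iff_forall_notMem]
    intro s hs
    obtain ⟨hs1, hs2⟩ := mem_filter.1 hs
    rcases mem_union.1 hs1 with h | h
    · have := (hFΔ s h).2; omega
    · rcases mem_union.1 h with h' | h'
      · have := (hRΔ s h').2; omega
      · obtain ⟨σ, hσ, rfl⟩ := mem_image.1 h'
        have h1 := (hRΔ σ hσ).2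
        have h2 := card_insert_le (Fin.last n) σ
        omega
  have hFRk2 : relF F R (k + 1 + 1) = ∅ := by
    rw [eq_empty_iff_forall_notMem]
    intro s hs
    obtain ⟨hs1, hs2⟩ := mem_filter.1 hs
    have := (hFΔ s (mem_sdiff.1 hs1).1).2
    omega
  have hFRk0 : relF F R (k - 1) = ∅ := by
    rw [eq_empty_iff_forall_notMem]
    intro s hs
    obtain ⟨hs1, hs2⟩ := mem_filter.1 hs
    obtain ⟨hsF, hsR⟩ := mem_sdiff.1 hs1
    apply hsR
    apply hRsk
    exact mem_filter.2 ⟨(hFΔ s hsF).1, by omega⟩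
  -- ranks
  have rX : (qMat (F ∪ coneC R) ∅ (k + 1)).rank
      = (qMat F R (k + 1)).rank + (cF R k).card := by
    rw [rank_cone hFc hRc hRF hνF (by omega : 1 ≤ k + 1), hRfil]
  have rG : (qMat (coneC Δ) ∅ (k + 1)).rank = (cF Δ k).card := by
    rw [rank_coneD hΔc hΔn (by omega : 1 ≤ k + 1), hΔfil]
  have r2 : (qMat (F ∪ coneC R) ∅ (k + 1 + 1)).rank = 0 := rank_zero_cols hXk2
  have r3 : (qMat F R (k + 1 + 1)).rank = 0 := rank_zero_cols hFRk2
  have r4 : (qMat F R k).rank = 0 := rank_zero_rows hFRk0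
  have r5 : (qMat F R (k + 1)).rank ≤ (relF F R (k + 1)).card := by
    have h := Matrix.rank_le_card_width (qMat F R (k + 1))
    rwa [Fintype.card_coe] at h
  have r6 : (qMat F R (k + 1)).rank ≤ (relF F R (k + 1 - 1)).card := by
    have h := Matrix.rank_le_card_height (qMat F R (k + 1))
    rwa [Fintype.card_coe] at h
  have hk1e : relF F R (k + 1 - 1) = relF F R k := by norm_num
  -- cards
  have cX : (cF (F ∪ coneC R) (k + 1)).card
      = ((cF R (k + 1)).card + (relF F R (k + 1)).card)
        + (R.filter (fun s => s.card + 1 = k + 1)).card := card_cF_decomp hνF hRF (k + 1)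
  have cR0 : (cF R (k + 1)).card = 0 := by rw [hRk1]; rfl
  have cV : (relF F R (k + 1)).card = (cF F (k + 1)).card := by rw [hFk1]
  have cW : (R.filter (fun s => s.card + 1 = k + 1)).card = (cF R k).card := by rw [hRfil]
  have cK : (relF F R k).card = (cF Δ k).card - (cF R k).card := by
    rw [hFRk, card_sdiff_of_subset hsubRk]
  have cb : (cF R k).card ≤ (cF Δ k).card := card_le_card hsubRk
  have hA : (relF (F ∪ coneC R) ∅ (k + 1)).card = (cF (F ∪ coneC R) (k + 1)).card := by
    rw [relF_empty]
  have r6' : (qMat F R (k + 1)).rank ≤ (relF F R k).card := by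
    rw [← hk1e]; exact r6
  simp only [bettiL]
  omega
end mainiff

section comb

variable {n : ℕ} {Δ F R X : Finset (Finset (Fin (n + 1)))}

lemma erase_subset_of_subset_insert {t σ : Finset (Fin (n + 1))} {a : Fin (n + 1)}
    (h : t ⊆ insert a σ) : t.erase a ⊆ σ := by
  intro x hx
  obtain ⟨hx1, hx2⟩ := mem_erase.1 hx
  rcases mem_insert.1 (h hx2) with h' | h'
  · exact absurd h' hx1
  · exact h'

lemma KCplx_cone (hΔn : ∀ s ∈ Δ, Fin.last n ∉ s) {k : ℕ} (hk : 1 ≤ k)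
    (hKF : KCplx Δ k F) (hKR : KCplx Δ (k - 1) R) :
    KCplx (coneC Δ) k (F ∪ coneC R) := by
  obtain ⟨⟨hF0, hFc⟩, hFsk, hFsub⟩ := hKF
  obtain ⟨⟨hR0, hRc⟩, hRsk, hRsub⟩ := hKR
  have hRΔ : ∀ s ∈ R, s ∈ Δ ∧ s.card ≤ k := by
    intro s hs
    have := mem_filter.1 (hRsub hs)
    exact ⟨this.1, by omega⟩
  have hFΔ : ∀ s ∈ F, s ∈ Δ ∧ s.card ≤ k + 1 := fun s hs => by
    have := mem_filter.1 (hFsub hs); exact ⟨this.1, this.2⟩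
  refine ⟨⟨mem_union_left _ hF0, ?_⟩, ?_, ?_⟩
  · rintro s hs t ht
    rcases mem_union.1 hs with h | h
    · exact mem_union_left _ (hFc s h t ht)
    · rcases mem_union.1 h with h' | h'
      · exact mem_union_right _ (mem_union_left _ (hRc s h' t ht))
      · obtain ⟨σ, hσ, rfl⟩ := mem_image.1 h'
        have hνσ : Fin.last n ∉ σ := hΔn σ (hRΔ σ hσ).1
        have hte : t.erase (Fin.last n) ∈ R :=
          hRc σ hσ _ (erase_subset_of_subset_insert ht)
        by_cases hνt : Fin.last n ∈ t
        · have : t = insert (Fin.last n) (t.erase (Fin.last n)) := (insert_erase hνt).symm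
          rw [this]
          exact mem_union_right _ (mem_union_right _ (mem_image_of_mem _ hte))
        · have ht' : t = t.erase (Fin.last n) := (erase_eq_of_notMem hνt).symm
          rw [ht']
          exact mem_union_right _ (mem_union_left _ hte)
  · intro s hs
    obtain ⟨hs1, hs2⟩ := mem_filter.1 hs
    rcases mem_union.1 hs1 with h | h
    · exact mem_union_left _ (hFsk (mem_filter.2 ⟨h, hs2⟩))
    · obtain ⟨σ, hσ, rfl⟩ := mem_image.1 h
      have hνσ : Fin.last n ∉ σ := hΔn σ hσ
      have hcard : σ.card + 1 = (insert (Fin.last n) σ).card :=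
        (card_insert_of_notMem hνσ).symm
      have hσR : σ ∈ R := hRsk (mem_filter.2 ⟨hσ, by omega⟩)
      exact mem_union_right _ (mem_union_right _ (mem_image_of_mem _ hσR))
  · intro s hs
    rcases mem_union.1 hs with h | h
    · exact mem_filter.2 ⟨mem_union_left _ (hFΔ s h).1, (hFΔ s h).2⟩
    · rcases mem_union.1 h with h' | h'
      · exact mem_filter.2 ⟨mem_union_left _ (hRΔ s h').1, by have := (hRΔ s h').2; omega⟩
      · obtain ⟨σ, hσ, rfl⟩ := mem_image.1 h'
        have hνσ : Fin.last n ∉ σ := hΔn σ (hRΔ σ hσ).1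
        refine mem_filter.2 ⟨mem_union_right _ (mem_image_of_mem _ (hRΔ σ hσ).1), ?_⟩
        rw [card_insert_of_notMem hνσ]
        have := (hRΔ σ hσ).2
        omega

end comb

section proj

variable {n : ℕ} {Δ F R X : Finset (Finset (Fin (n + 1)))}

lemma proj_link_decomp (hΔ : IsComplex Δ) (hΔn : ∀ s ∈ Δ, Fin.last n ∉ s)
    {k : ℕ} (hk : 1 ≤ k) (hKX : KCplx (coneC Δ) k X) :
    KCplx Δ k (X ∩ Δ) ∧ KCplx Δ (k - 1) (linkC Δ X) ∧
      X = (X ∩ Δ) ∪ coneC (linkC Δ X) := by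
  obtain ⟨⟨hX0, hXc⟩, hXsk, hXsub⟩ := hKX
  have hKF : KCplx Δ k (X ∩ Δ) := by
    refine ⟨⟨mem_inter.2 ⟨hX0, hΔ.1⟩, ?_⟩, ?_, ?_⟩
    · intro s hs t ht
      obtain ⟨h1, h2⟩ := mem_inter.1 hs
      exact mem_inter.2 ⟨hXc s h1 t ht, hΔ.2 s h2 t ht⟩
    · intro s hs
      obtain ⟨h1, h2⟩ := mem_filter.1 hs
      exact mem_inter.2 ⟨hXsk (mem_filter.2 ⟨mem_union_left _ h1, h2⟩), h1⟩
    · intro s hs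
      obtain ⟨h1, h2⟩ := mem_inter.1 hs
      have := mem_filter.1 (hXsub h1)
      exact mem_filter.2 ⟨h2, this.2⟩
  have hKR : KCplx Δ (k - 1) (linkC Δ X) := by
    refine ⟨⟨?_, ?_⟩, ?_, ?_⟩
    · refine mem_filter.2 ⟨hΔ.1, ?_⟩
      apply hXsk
      refine mem_filter.2 ⟨mem_union_right _ (mem_image_of_mem _ hΔ.1), ?_⟩
      have : (insert (Fin.last n) (∅ : Finset (Fin (n + 1)))).card = 1 := by simp
      omega
    · intro s hs t ht
      obtain ⟨h1, h2⟩ := mem_filter.1 hs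
      refine mem_filter.2 ⟨hΔ.2 s h1 t ht, ?_⟩
      exact hXc _ h2 _ (insert_subset_insert _ ht)
    · intro s hs
      obtain ⟨h1, h2⟩ := mem_filter.1 hs
      refine mem_filter.2 ⟨h1, ?_⟩
      apply hXsk
      refine mem_filter.2 ⟨mem_union_right _ (mem_image_of_mem _ h1), ?_⟩
      rw [card_insert_of_notMem (hΔn s h1)]
      omega
    · intro s hs
      obtain ⟨h1, h2⟩ := mem_filter.1 hs
      refine mem_filter.2 ⟨h1, ?_⟩
      have := (mem_filter.1 (hXsub h2)).2
      rw [card_insert_of_notMem (hΔn s h1)] at this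
      omega
  refine ⟨hKF, hKR, ?_⟩
  apply Finset.Subset.antisymm
  · intro s hs
    have hsC : s ∈ coneC Δ := (mem_filter.1 (hXsub hs)).1
    rcases mem_union.1 hsC with h | h
    · exact mem_union_left _ (mem_inter.2 ⟨hs, h⟩)
    · obtain ⟨σ, hσ, rfl⟩ := mem_image.1 h
      have hσR : σ ∈ linkC Δ X := mem_filter.2 ⟨hσ, hs⟩
      exact mem_union_right _ (mem_union_right _ (mem_image_of_mem _ hσR))
  · intro s hs
    rcases mem_union.1 hs with h | h
    · exact (mem_inter.1 h).1
    · rcases mem_union.1 h with h' | h'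
      · have h2 := (mem_filter.1 h').2
        exact hXc _ h2 _ (subset_insert _ _)
      · obtain ⟨σ, hσ, rfl⟩ := mem_image.1 h'
        exact (mem_filter.1 hσ).2

lemma proj_of_cone (hΔn : ∀ s ∈ Δ, Fin.last n ∉ s) {k : ℕ} (hk : 1 ≤ k)
    (hKF : KCplx Δ k F) (hKR : KCplx Δ (k - 1) R) :
    (F ∪ coneC R) ∩ Δ = F ∧ linkC Δ (F ∪ coneC R) = R := by
  obtain ⟨⟨hF0, hFc⟩, hFsk, hFsub⟩ := hKF
  obtain ⟨⟨hR0, hRc⟩, hRsk, hRsub⟩ := hKR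
  have hRΔ : ∀ s ∈ R, s ∈ Δ ∧ s.card ≤ k := by
    intro s hs
    have := mem_filter.1 (hRsub hs)
    exact ⟨this.1, by omega⟩
  have hRF : R ⊆ F := fun s hs => hFsk (mem_filter.2 ⟨(hRΔ s hs).1, (hRΔ s hs).2⟩)
  constructor
  · apply Finset.Subset.antisymm
    · intro s hs
      obtain ⟨h1, h2⟩ := mem_inter.1 hs
      rcases mem_union.1 h1 with h | h
      · exact h
      · rcases mem_union.1 h with h' | h'
        · exact hRF h'
        · obtain ⟨σ, hσ, rfl⟩ := mem_image.1 h'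
          exact absurd (mem_insert_self _ _) (hΔn _ h2)
    · intro s hs
      exact mem_inter.2 ⟨mem_union_left _ hs, (mem_filter.1 (hFsub hs)).1⟩
  · apply Finset.Subset.antisymm
    · intro s hs
      obtain ⟨h1, h2⟩ := mem_filter.1 hs
      have hνs : Fin.last n ∉ s := hΔn s h1
      rcases mem_union.1 h2 with h | h
      · exact absurd (mem_insert_self _ _)
          (hΔn _ (mem_filter.1 (hFsub h)).1)
      · rcases mem_union.1 h with h' | h'
        · exact absurd (mem_insert_self _ _)
            (hΔn _ (hRΔ _ h').1)
        · obtain ⟨σ, hσ, heq⟩ := mem_image.1 h'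
          have hνσ : Fin.last n ∉ σ := hΔn σ (hRΔ σ hσ).1
          have : σ = s := by
            have e1 := erase_insert hνσ
            have e2 := erase_insert hνs
            rw [← e1, heq, e2]
          rwa [← this]
    · intro s hs
      refine mem_filter.2 ⟨(hRΔ s hs).1, ?_⟩
      exact mem_union_right _ (mem_union_right _ (mem_image_of_mem _ hs))

end proj

/-- The binomial correspondence `X ↦ (X ∩ Δ, Link(n,X))` restricts to a bijection between
the `k`-dimensional spanning trees of `Cone(n,Δ)` and the rooted `(n-1,k)`-forests of `Δ`
(pairs `(F,R)` of an `(n-1,k)`-complex and an `(n-1,k-1)`-complex of `Δ` with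
`β_{k-1}(F,R) = β_k(F,R) = 0`); moreover `F ∪ Cone(n,R)` is a `k`-tree of `Cone(n,Δ)` iff
`(F,R)` is a rooted forest. -/
theorem stmt9 (n k : ℕ) (hk : 1 ≤ k) (Δ : Finset (Finset (Fin (n + 1))))
    (hΔ : IsComplex Δ) (hΔn : ∀ s ∈ Δ, Fin.last n ∉ s) :
    Set.BijOn (fun X => (X ∩ Δ, linkC Δ X))
      {X | IsTree (coneC Δ) k X}
      {P : Finset (Finset (Fin (n + 1))) × Finset (Finset (Fin (n + 1))) |
        KCplx Δ k P.1 ∧ KCplx Δ (k - 1) P.2 ∧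
          bettiL P.1 P.2 k = 0 ∧ bettiL P.1 P.2 (k + 1) = 0} ∧
    (∀ F R, KCplx Δ k F → KCplx Δ (k - 1) R →
      (IsTree (coneC Δ) k (F ∪ coneC R) ↔ bettiL F R k = 0 ∧ bettiL F R (k + 1) = 0)) := by
  have hΔc := hΔ.2
  have part2 : ∀ F R, KCplx Δ k F → KCplx Δ (k - 1) R →
      (IsTree (coneC Δ) k (F ∪ coneC R) ↔ bettiL F R k = 0 ∧ bettiL F R (k + 1) = 0) := by
    intro F R hKF hKR
    constructor
    · rintro ⟨_, hb, hcnt⟩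
      exact (tree_iff_main hΔc hΔn hk hKF hKR).1 ⟨hb, hcnt⟩
    · intro h
      refine ⟨KCplx_cone hΔn hk hKF hKR, ?_⟩
      exact (tree_iff_main hΔc hΔn hk hKF hKR).2 h
  refine ⟨⟨?_, ?_, ?_⟩, part2⟩
  · -- MapsTo
    intro X hX
    obtain ⟨hK, hb, hcnt⟩ := hX
    obtain ⟨hKF, hKR, hdec⟩ := proj_link_decomp hΔ hΔn hk hK
    have hb' : bettiL ((X ∩ Δ) ∪ coneC (linkC Δ X)) ∅ (k + 1) = 0 := hdec ▸ hb
    have hcnt' : (cF ((X ∩ Δ) ∪ coneC (linkC Δ X)) (k + 1)).card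
        = (qMat (coneC Δ) ∅ (k + 1)).rank := hdec ▸ hcnt
    have := (tree_iff_main hΔc hΔn hk hKF hKR).1 ⟨hb', hcnt'⟩
    exact ⟨hKF, hKR, this.1, this.2⟩
  · -- InjOn
    intro X1 h1 X2 h2 heq
    obtain ⟨_, _, hdec1⟩ := proj_link_decomp hΔ hΔn hk h1.1
    obtain ⟨_, _, hdec2⟩ := proj_link_decomp hΔ hΔn hk h2.1
    have e1 : X1 ∩ Δ = X2 ∩ Δ := congrArg Prod.fst heq
    have e2 : linkC Δ X1 = linkC Δ X2 := congrArg Prod.snd heq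
    rw [hdec1, hdec2, e1, e2]
  · -- SurjOn
    intro P hP
    obtain ⟨hKF, hKR, hb1, hb2⟩ := hP
    have hT : IsTree (coneC Δ) k (P.1 ∪ coneC P.2) :=
      (part2 P.1 P.2 hKF hKR).2 ⟨hb1, hb2⟩
    obtain ⟨e1, e2⟩ := proj_of_cone hΔn hk hKF hKR
    refine ⟨P.1 ∪ coneC P.2, hT, ?_⟩
    simp only
    rw [e1, e2]
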